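/- arXiv:1209.2999 — 7 statements merged into one kernel-verified Lean document; each statement's English description precedes it below -/
import Mathlib

section
/- Let L be a Lie algebra over a field K of characteristic 0, let n ≥ 3, and let r_1,…,r_n ∈ K be pairwise distinct. Suppose C_1,…,C_n ∈ L satisfy [C_i,[C_j,C_k]] = 0 for all pairwise distinct i,j,k, and [C_i,[C_i,C_k]] − [C_j,[C_j,C_k]] = (r_j − r_i)·C_k whenever i ≠ k and j ≠ k. Define Y_q = [C_l,[C_l,C_q]] + r_l·C_q for any l ≠ q (this is independent of the choice of l). Then [C_p, Y_q] = −[C_q, Y_p] for all p, q ∈ {1,…,n}. -/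
/-- For elements `C 1, …, C n` of a Lie algebra `L` over a field `K` of
characteristic zero satisfying the two families of bracket relations, and `Y q`
defined by `Y q = ⁅C l, ⁅C l, C q⁆⁆ + r l • C q` for any `l ≠ q`, one has
`⁅C p, Y q⁆ = -⁅C q, Y p⁆` for all `p, q`. -/
theorem stmt0 {K L : Type*} [Field K] [CharZero K] [LieRing L] [LieAlgebra K L]
    (n : ℕ) (hn : 3 ≤ n) (r : Fin n → K) (hr : Function.Injective r)
    (C : Fin n → L)
    (h1 : ∀ i j k : Fin n, i ≠ j → j ≠ k → i ≠ k → ⁅C i, ⁅C j, C k⁆⁆ = 0)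
    (h2 : ∀ i j k : Fin n, i ≠ k → j ≠ k →
      ⁅C i, ⁅C i, C k⁆⁆ - ⁅C j, ⁅C j, C k⁆⁆ = (r j - r i) • C k)
    (Y : Fin n → L)
    (hY : ∀ q l : Fin n, l ≠ q → Y q = ⁅C l, ⁅C l, C q⁆⁆ + r l • C q) :
    ∀ p q : Fin n, ⁅C p, Y q⁆ = -⁅C q, Y p⁆ := by
  -- existence of a third index
  have hthird : ∀ a b : Fin n, ∃ c : Fin n, c ≠ a ∧ c ≠ b := by
    intro a b
    have hcard : ({a, b} : Finset (Fin n)).card ≤ 2 :=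
      (Finset.card_insert_le _ _).trans (by simp)
    have hne : (({a, b} : Finset (Fin n))ᶜ).Nonempty := by
      rw [← Finset.card_pos, Finset.card_compl, Fintype.card_fin]
      omega
    obtain ⟨c, hc⟩ := hne
    simp only [Finset.mem_compl, Finset.mem_insert, Finset.mem_singleton, not_or] at hc
    exact ⟨c, hc.1, hc.2⟩
  -- key cyclic identity: T a b = - T b c for pairwise distinct a b c,
  -- where T a b = ⁅C a, ⁅C b, ⁅C b, C a⁆⁆⁆
  have hT : ∀ a b c : Fin n, a ≠ b → b ≠ c → a ≠ c →
      ⁅C a, ⁅C b, ⁅C b, C a⁆⁆⁆ = -⁅C b, ⁅C c, ⁅C c, C b⁆⁆⁆ := by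
    intro a b c hab hbc hac
    have hJ : ⁅C a, ⁅C b, ⁅C b, C a⁆⁆⁆
        = ⁅⁅C a, C b⁆, ⁅C b, C a⁆⁆ + ⁅C b, ⁅C a, ⁅C b, C a⁆⁆⁆ := leibniz_lie _ _ _
    have h0 : ⁅⁅C a, C b⁆, ⁅C b, C a⁆⁆ = 0 := by
      rw [show ⁅C b, C a⁆ = -⁅C a, C b⁆ from (lie_skew _ _).symm, lie_neg, lie_self, neg_zero]
    have hmid : ⁅C a, ⁅C b, C a⁆⁆ = -(⁅C c, ⁅C c, C b⁆⁆ + (r c - r a) • C b) := by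
      have h2' : ⁅C a, ⁅C a, C b⁆⁆ = ⁅C c, ⁅C c, C b⁆⁆ + (r c - r a) • C b := by
        have := h2 a c b hab hbc.symm
        linear_combination (norm := module) this
      rw [show ⁅C b, C a⁆ = -⁅C a, C b⁆ from (lie_skew _ _).symm, lie_neg, h2']
    rw [hJ, h0, zero_add, hmid]
    rw [lie_neg, lie_add, lie_smul, lie_self, smul_zero, add_zero]
  intro p q
  by_cases hpq : p = q
  · subst hpq
    -- need ⁅C p, Y p⁆ = 0
    obtain ⟨l, hlp, -⟩ := hthird p p
    obtain ⟨m, hmp, hml⟩ := hthird p l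
    suffices h : ⁅C p, Y p⁆ = 0 by rw [h, neg_zero]
    rw [hY p l hlp, lie_add, lie_smul, lie_self, smul_zero, add_zero]
    -- cyclic: T p l = -T l m = T m p = -T p l
    have e1 := hT p l m hlp.symm (Ne.symm hml) hmp.symm
    have e2 := hT l m p (Ne.symm hml) hmp hlp
    have e3 := hT m p l hmp hlp.symm hml
    have h2x : (2 : K) • ⁅C p, ⁅C l, ⁅C l, C p⁆⁆⁆ = 0 := by
      linear_combination (norm := module) e1 - e2 + e3
    have := smul_eq_zero.mp h2x
    rcases this with h | h
    · exact absurd h two_ne_zero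
    · exact h
  · obtain ⟨m, hmp, hmq⟩ := hthird p q
    rw [hY q m hmq, hY p m hmp]
    have hz1 : ⁅C p, ⁅C m, C q⁆⁆ = 0 := h1 p m q hmp.symm hmq hpq
    have hz2 : ⁅C q, ⁅C m, C p⁆⁆ = 0 := h1 q m p hmq.symm hmp (Ne.symm hpq)
    have hJ1 : ⁅C p, ⁅C m, ⁅C m, C q⁆⁆⁆
        = ⁅⁅C p, C m⁆, ⁅C m, C q⁆⁆ + ⁅C m, ⁅C p, ⁅C m, C q⁆⁆⁆ := leibniz_lie _ _ _
    have hJ2 : ⁅C q, ⁅C m, ⁅C m, C p⁆⁆⁆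
        = ⁅⁅C q, C m⁆, ⁅C m, C p⁆⁆ + ⁅C m, ⁅C q, ⁅C m, C p⁆⁆⁆ := leibniz_lie _ _ _
    have hsym : ⁅⁅C q, C m⁆, ⁅C m, C p⁆⁆ = -⁅⁅C p, C m⁆, ⁅C m, C q⁆⁆ := by
      rw [show ⁅C q, C m⁆ = -⁅C m, C q⁆ from (lie_skew _ _).symm,
        show ⁅C m, C p⁆ = -⁅C p, C m⁆ from (lie_skew _ _).symm,
        neg_lie, lie_neg, neg_neg, ← lie_skew]
    have hsk : ⁅C q, C p⁆ = -⁅C p, C q⁆ := (lie_skew _ _).symm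
    rw [lie_add, lie_add, lie_smul, lie_smul, hJ1, hJ2, hz1, hz2]
    rw [hsym, hsk]
    simp only [lie_zero, add_zero, smul_neg]
    abel
end

section
/- Let L be a Lie algebra over a field K of characteristic 0, n ≥ 3, and r_1,…,r_n ∈ K pairwise distinct. Suppose C_1,…,C_n ∈ L satisfy [C_i,[C_j,C_k]] = 0 for all pairwise distinct i,j,k, and [C_i,[C_i,C_k]] − [C_j,[C_j,C_k]] = (r_j − r_i)·C_k whenever i ≠ k and j ≠ k. Then [C_p, [C_l, [C_l, C_p]]] = 0 for all p ≠ l. -/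
lemma stmt2_aux {L : Type*} [LieRing L] (x y : L) :
    ⁅x, ⁅y, ⁅y, x⁆⁆⁆ = -⁅y, ⁅x, ⁅x, y⁆⁆⁆ := by
  rw [leibniz_lie x y ⁅y, x⁆]
  rw [show (⁅y, x⁆ : L) = -⁅x, y⁆ from (lie_skew y x).symm]
  simp only [lie_neg, lie_self, neg_zero, zero_add]

/-- under the relations of `g(n)`, one has `⁅C p, ⁅C l, ⁅C l, C p⁆⁆⁆ = 0`
for all `p ≠ l`. -/
theorem stmt2 {K L : Type*} [Field K] [CharZero K] [LieRing L] [LieAlgebra K L]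
    (n : ℕ) (hn : 3 ≤ n) (r : Fin n → K) (hr : Function.Injective r)
    (C : Fin n → L)
    (h1 : ∀ i j k : Fin n, i ≠ j → j ≠ k → i ≠ k → ⁅C i, ⁅C j, C k⁆⁆ = 0)
    (h2 : ∀ i j k : Fin n, i ≠ k → j ≠ k →
      ⁅C i, ⁅C i, C k⁆⁆ - ⁅C j, ⁅C j, C k⁆⁆ = (r j - r i) • C k) :
    ∀ p l : Fin n, p ≠ l → ⁅C p, ⁅C l, ⁅C l, C p⁆⁆⁆ = 0 := by
  -- invariance: f p l = f p m for m ∉ {p, l}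
  have inv : ∀ p l m : Fin n, l ≠ p → m ≠ p →
      ⁅C p, ⁅C l, ⁅C l, C p⁆⁆⁆ = ⁅C p, ⁅C m, ⁅C m, C p⁆⁆⁆ := by
    intro p l m hlp hmp
    have key := h2 l m p hlp hmp
    have : ⁅C l, ⁅C l, C p⁆⁆ = (r m - r l) • C p + ⁅C m, ⁅C m, C p⁆⁆ := by
      rw [← key]; abel
    rw [this, lie_add, lie_smul, lie_self, smul_zero, zero_add]
  intro p l hpl
  -- pick m distinct from p and l
  obtain ⟨m, hm⟩ : ∃ m : Fin n, m ≠ p ∧ m ≠ l := by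
    have hcard : ({p, l} : Finset (Fin n)).card < Fintype.card (Fin n) := by
      calc ({p, l} : Finset (Fin n)).card ≤ 2 := Finset.card_insert_le _ _ |>.trans (by simp)
        _ < n := by omega
        _ = Fintype.card (Fin n) := (Fintype.card_fin n).symm
    have hss : ({p, l} : Finset (Fin n)) ⊂ Finset.univ := by
      rw [Finset.ssubset_univ_iff]
      intro h
      rw [h, Finset.card_univ] at hcard
      exact lt_irrefl _ hcard
    obtain ⟨m, _, hm⟩ := Finset.exists_of_ssubset hss
    exact ⟨m, by simpa [not_or] using hm⟩
  obtain ⟨hmp, hml⟩ := hm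
  set f : Fin n → Fin n → L := fun a b => ⁅C a, ⁅C b, ⁅C b, C a⁆⁆⁆ with hf
  have anti : ∀ a b : Fin n, f a b = -f b a := fun a b => stmt2_aux (C a) (C b)
  have e1 : f p l = f p m := inv p l m (Ne.symm hpl) hmp
  have e2 : f p m = -f m p := anti p m
  have e3 : f m p = f m l := inv m p l (Ne.symm hmp).symm.symm hml.symm
  have e4 : f m l = -f l m := anti m l
  have e5 : f l m = f l p := inv l m p hml hpl
  have e6 : f l p = -f p l := anti l p
  have : f p l = -f p l := by
    calc f p l = f p m := e1
      _ = -f m p := e2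
      _ = -f m l := by rw [e3]
      _ = f l m := by rw [e4, neg_neg]
      _ = f l p := e5
      _ = -f p l := e6
  have h2f : (2 : K) • f p l = 0 := by
    rw [two_smul]
    nth_rewrite 1 [this]
    simp
  rcases smul_eq_zero.mp h2f with h | h
  · exact absurd h two_ne_zero
  · exact h
end

section
/- Let E_{a,b} denote the (n+1)×(n+1) matrix units over a commutative ring Q containing distinguished elements λ̂_1,…,λ̂_n, λ̂ with λ̂ = λ̂_i² + r_i for all i. Define, for k ≥ 1, Q_i^{2k−1} = (E_{i,n+1}+E_{n+1,i}) ⊗ λ̂^{k−1} λ̂_i and Q_{ij}^{2k} = (E_{i,j}−E_{j,i}) ⊗ λ̂^{k−1} λ̂_i λ̂_j in so_{n,1} ⊗ Q. Then [Q_i^{2k_1−1}, Q_j^{2k_2−1}] = Q_{ij}^{2(k_1+k_2−1)} for i ≠ j, and [Q_i^{2k_1−1}, Q_i^{2k_2−1}] = 0. -/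
set_option synthInstance.maxHeartbeats 1000000
set_option maxHeartbeats 1000000

open MvPolynomial Matrix


lemma aux_bracket {R : Type*} [CommRing R] {m : Type*} [Fintype m] [DecidableEq m]
    (c₁ c₂ : R) (a b p : m) (hab : a ≠ b) (hap : a ≠ p) (hbp : b ≠ p) :
    ⁅c₁ • (single a p (1:R) + single p a 1),
      c₂ • (single b p (1:R) + single p b 1)⁆
    = (c₁ * c₂) • (single a b (1:R) - single b a 1) := by
  rw [Ring.lie_def, Matrix.smul_mul, Matrix.smul_mul, Matrix.mul_smul, Matrix.mul_smul,
    smul_smul, smul_smul, mul_comm c₂ c₁, ← smul_sub]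
  congr 1
  rw [add_mul, add_mul, mul_add, mul_add, mul_add, mul_add]
  have e1 : single a p (1:R) * single b p 1 = 0 :=
    Matrix.single_mul_single_of_ne 1 a p b hbp.symm 1
  have e2 : single p a (1:R) * single b p 1 = 0 :=
    Matrix.single_mul_single_of_ne 1 p a b hab 1
  have e3 : single p a (1:R) * single p b 1 = 0 :=
    Matrix.single_mul_single_of_ne 1 p a p hap 1
  have e4 : single b p (1:R) * single a p 1 = 0 :=
    Matrix.single_mul_single_of_ne 1 b p a hap.symm 1
  have e5 : single p b (1:R) * single a p 1 = 0 :=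
    Matrix.single_mul_single_of_ne 1 p b a hab.symm 1
  have e6 : single p b (1:R) * single p a 1 = 0 :=
    Matrix.single_mul_single_of_ne 1 p b p hbp 1
  rw [e1, e2, e3, e4, e5, e6, Matrix.single_mul_single_same, Matrix.single_mul_single_same]
  simp [sub_sub_sub_comm]

lemma aux_self {R : Type*} [CommRing R] {m : Type*} [Fintype m] [DecidableEq m]
    (c₁ c₂ : R) (M : Matrix m m R) :
    ⁅c₁ • M, c₂ • M⁆ = 0 := by
  rw [Ring.lie_def, Matrix.smul_mul, Matrix.smul_mul, Matrix.mul_smul, Matrix.mul_smul,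
    smul_smul, smul_smul, mul_comm c₂ c₁, sub_self]

/-- in `so_{n,1} ⊗ Q` (matrices over `Q = K[λ₁,…,λₙ]/(λᵢ²−λⱼ²+rᵢ−rⱼ)`),
with `Q_i^{2k−1} = λ̂^{k−1} λ̂ᵢ • (E_{i,n+1}+E_{n+1,i})` and
`Q_{ij}^{2k} = λ̂^{k−1} λ̂ᵢ λ̂ⱼ • (E_{i,j}−E_{j,i})`, one has
`[Q_i^{2k₁−1}, Q_j^{2k₂−1}] = Q_{ij}^{2(k₁+k₂−1)}` for `i ≠ j` and
`[Q_i^{2k₁−1}, Q_i^{2k₂−1}] = 0`.  (Superscripts are encoded so that `Qodd i k`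
carries `λ̂ᵏ`, i.e. `Qodd i k = Q_i^{2(k+1)−1}`, and `Qeven i j k = Q_{ij}^{2(k+1)}`.) -/
theorem stmt7 {K : Type*} [RCLike K] (n : ℕ) (hn : 2 ≤ n)
    (r : Fin n → K) (hr : Function.Injective r)
    (I : Ideal (MvPolynomial (Fin n) K))
    (hI : I = Ideal.span {P | ∃ i j : Fin n,
      P = X i ^ 2 - X j ^ 2 + MvPolynomial.C (r i) - MvPolynomial.C (r j)})
    (lam : MvPolynomial (Fin n) K ⧸ I)
    (hlam : ∀ i : Fin n, lam = (Ideal.Quotient.mk I (X i)) ^ 2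
      + algebraMap K (MvPolynomial (Fin n) K ⧸ I) (r i))
    (Qodd : Fin n → ℕ → Matrix (Fin (n + 1)) (Fin (n + 1)) (MvPolynomial (Fin n) K ⧸ I))
    (hQodd : ∀ (i : Fin n) (k : ℕ), Qodd i k =
      (lam ^ k * Ideal.Quotient.mk I (X i)) •
        (Matrix.single i.castSucc (Fin.last n) (1 : MvPolynomial (Fin n) K ⧸ I)
          + Matrix.single (Fin.last n) i.castSucc (1 : MvPolynomial (Fin n) K ⧸ I)))
    (Qeven : Fin n → Fin n → ℕ → Matrix (Fin (n + 1)) (Fin (n + 1)) (MvPolynomial (Fin n) K ⧸ I))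
    (hQeven : ∀ (i j : Fin n) (k : ℕ), Qeven i j k =
      (lam ^ k * Ideal.Quotient.mk I (X i) * Ideal.Quotient.mk I (X j)) •
        (Matrix.single i.castSucc j.castSucc (1 : MvPolynomial (Fin n) K ⧸ I)
          - Matrix.single j.castSucc i.castSucc (1 : MvPolynomial (Fin n) K ⧸ I))) :
    (∀ (i j : Fin n) (k₁ k₂ : ℕ), i ≠ j →
      ⁅Qodd i k₁, Qodd j k₂⁆ = Qeven i j (k₁ + k₂)) ∧
    (∀ (i : Fin n) (k₁ k₂ : ℕ), ⁅Qodd i k₁, Qodd i k₂⁆ = 0) := by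
  refine ⟨fun i j k₁ k₂ hij => ?_, fun i k₁ k₂ => ?_⟩
  · rw [hQodd, hQodd, hQeven,
      aux_bracket _ _ _ _ _ (fun h => hij (Fin.castSucc_injective n h))
        (Fin.castSucc_lt_last i).ne (Fin.castSucc_lt_last j).ne]
    congr 1
    ring
  · rw [hQodd, hQodd, aux_self]
end

section
/- With the notation of the quasigraded algebra: in so_{n,1} ⊗ Q (Q = K[λ_1,…,λ_n]/(λ_i²−λ_j²+r_i−r_j), λ̂ = λ̂_i²+r_i), defining Q_{ij}^{2k} = (E_{i,j}−E_{j,i}) ⊗ λ̂^{k−1} λ̂_i λ̂_j and Q_l^{2k−1} = (E_{l,n+1}+E_{n+1,l}) ⊗ λ̂^{k−1} λ̂_l, one has for i ≠ j, l arbitrary: [Q_{ij}^{2k_1}, Q_l^{2k_2−1}] = δ_{lj} Q_i^{2k_1+2k_2−1} − δ_{il} Q_j^{2k_1+2k_2−1} − r_j δ_{lj} Q_i^{2k_1+2k_2−3} + r_i δ_{il} Q_j^{2k_1+2k_2−3}. -/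
set_option synthInstance.maxHeartbeats 1000000
set_option maxHeartbeats 1000000

open MvPolynomial Matrix

lemma aux8 {K R : Type*} [CommRing K] [CommRing R] [Algebra K R] {n : ℕ}
    (lam : R) (x : Fin n → R) (rr : Fin n → K)
    (hx : ∀ m : Fin n, x m * x m = lam - algebraMap K R (rr m))
    (i j l : Fin n) (k₁ k₂ : ℕ) (hij : i ≠ j) :
    ⁅(lam ^ k₁ * x i * x j) • (single i.castSucc j.castSucc (1 : R)
        - single j.castSucc i.castSucc (1 : R)),
      (lam ^ k₂ * x l) • (single l.castSucc (Fin.last n) (1 : R)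
        + single (Fin.last n) l.castSucc (1 : R))⁆
    = (if l = j then (lam ^ (k₁ + k₂ + 1) * x i) •
          (single i.castSucc (Fin.last n) (1 : R)
            + single (Fin.last n) i.castSucc (1 : R)) else 0)
      - (if i = l then (lam ^ (k₁ + k₂ + 1) * x j) •
          (single j.castSucc (Fin.last n) (1 : R)
            + single (Fin.last n) j.castSucc (1 : R)) else 0)
      - (if l = j then rr j • ((lam ^ (k₁ + k₂) * x i) •
          (single i.castSucc (Fin.last n) (1 : R)
            + single (Fin.last n) i.castSucc (1 : R))) else 0)
      + (if i = l then rr i • ((lam ^ (k₁ + k₂) * x j) •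
          (single j.castSucc (Fin.last n) (1 : R)
            + single (Fin.last n) j.castSucc (1 : R))) else 0) := by
  have hlast : ∀ m : Fin n, (Fin.castSucc m : Fin (n + 1)) ≠ Fin.last n :=
    fun m => (Fin.castSucc_lt_last m).ne
  rw [Ring.lie_def, Matrix.smul_mul, Matrix.smul_mul, Matrix.mul_smul, Matrix.mul_smul,
    smul_smul, smul_smul]
  by_cases hlj : l = j
  · subst hlj
    have hil : ¬ i = l := hij
    have hli : l.castSucc ≠ i.castSucc := fun h => hij (Fin.castSucc_injective n h).symm
    have hil' : i.castSucc ≠ l.castSucc := fun h => hij (Fin.castSucc_injective n h)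
    simp only [if_pos rfl, if_neg hil, sub_zero, add_zero, eq_self_iff_true, if_true]
    rw [← smul_assoc, Algebra.smul_def (rr l) (lam ^ (k₁ + k₂) * x i)]
    simp only [Matrix.mul_add, Matrix.add_mul, Matrix.sub_mul, Matrix.mul_sub,
      Matrix.single_mul_single_same,
      Matrix.single_mul_single_of_ne _ _ _ _ (hlast _),
      Matrix.single_mul_single_of_ne _ _ _ _ (Ne.symm (hlast _)),
      Matrix.single_mul_single_of_ne _ _ _ _ hli,
      Matrix.single_mul_single_of_ne _ _ _ _ hil',
      mul_one, zero_sub, sub_zero, zero_add, add_zero, smul_neg, sub_neg_eq_add]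
    rw [show (lam ^ k₁ * x i * x l) * (lam ^ k₂ * x l)
        = lam ^ (k₁ + k₂ + 1) * x i - algebraMap K R (rr l) * (lam ^ (k₁ + k₂) * x i) by
      linear_combination (lam ^ (k₁ + k₂) * x i) * hx l]
    rw [show (lam ^ k₂ * x l * (lam ^ k₁ * x i * x l))
        = lam ^ (k₁ + k₂ + 1) * x i - algebraMap K R (rr l) * (lam ^ (k₁ + k₂) * x i) by
      linear_combination (lam ^ (k₁ + k₂) * x i) * hx l]
    module
  · by_cases hilc : i = l
    · subst hilc
      have hne1 : j.castSucc ≠ i.castSucc := fun h => hij (Fin.castSucc_injective n h).symm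
      have hne2 : i.castSucc ≠ j.castSucc := fun h => hij (Fin.castSucc_injective n h)
      simp only [if_pos rfl, if_neg hlj, zero_sub, sub_zero, zero_add, add_zero,
        eq_self_iff_true, if_true]
      rw [← smul_assoc, Algebra.smul_def (rr i) (lam ^ (k₁ + k₂) * x j)]
      simp only [Matrix.mul_add, Matrix.add_mul, Matrix.sub_mul, Matrix.mul_sub,
        Matrix.single_mul_single_same,
        Matrix.single_mul_single_of_ne _ _ _ _ (hlast _),
        Matrix.single_mul_single_of_ne _ _ _ _ (Ne.symm (hlast _)),
        Matrix.single_mul_single_of_ne _ _ _ _ hne1,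
        Matrix.single_mul_single_of_ne _ _ _ _ hne2,
        mul_one, zero_sub, sub_zero, zero_add, add_zero, smul_neg, sub_neg_eq_add]
      rw [show (lam ^ k₁ * x i * x j) * (lam ^ k₂ * x i)
          = lam ^ (k₁ + k₂ + 1) * x j - algebraMap K R (rr i) * (lam ^ (k₁ + k₂) * x j) by
        linear_combination (lam ^ (k₁ + k₂) * x j) * hx i]
      rw [show (lam ^ k₂ * x i * (lam ^ k₁ * x i * x j))
          = lam ^ (k₁ + k₂ + 1) * x j - algebraMap K R (rr i) * (lam ^ (k₁ + k₂) * x j) by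
        linear_combination (lam ^ (k₁ + k₂) * x j) * hx i]
      module
    · have hne1 : j.castSucc ≠ l.castSucc := fun h => hlj ((Fin.castSucc_injective n h).symm)
      have hne2 : l.castSucc ≠ i.castSucc := fun h => hilc ((Fin.castSucc_injective n h).symm)
      have hne3 : l.castSucc ≠ j.castSucc := fun h => hlj (Fin.castSucc_injective n h)
      have hne4 : i.castSucc ≠ l.castSucc := fun h => hilc (Fin.castSucc_injective n h)
      simp only [if_neg hlj, if_neg hilc, sub_zero, add_zero]
      simp only [Matrix.mul_add, Matrix.add_mul, Matrix.sub_mul, Matrix.mul_sub,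
        Matrix.single_mul_single_of_ne _ _ _ _ (hlast _),
        Matrix.single_mul_single_of_ne _ _ _ _ (Ne.symm (hlast _)),
        Matrix.single_mul_single_of_ne _ _ _ _ hne1,
        Matrix.single_mul_single_of_ne _ _ _ _ hne2,
        Matrix.single_mul_single_of_ne _ _ _ _ hne3,
        Matrix.single_mul_single_of_ne _ _ _ _ hne4,
        sub_zero, add_zero, zero_sub, neg_zero, smul_zero, sub_self]


/-- in `so_{n,1} ⊗ Q`, with `Q_{ij}^{2k} = λ̂^{k−1} λ̂ᵢ λ̂ⱼ • (E_{i,j}−E_{j,i})`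
and `Q_l^{2k−1} = λ̂^{k−1} λ̂_l • (E_{l,n+1}+E_{n+1,l})`, for `i ≠ j` one has
`[Q_{ij}^{2k₁}, Q_l^{2k₂−1}] = δ_{lj} Q_i^{2k₁+2k₂−1} − δ_{il} Q_j^{2k₁+2k₂−1}
 − r_j δ_{lj} Q_i^{2k₁+2k₂−3} + r_i δ_{il} Q_j^{2k₁+2k₂−3}`.
(`Qeven i j k = Q_{ij}^{2(k+1)}`, `Qodd l k = Q_l^{2(k+1)−1}`, so the right-hand
superscripts `2k₁+2k₂+3` and `2k₁+2k₂+1` correspond to indices `k₁+k₂+1` and `k₁+k₂`.) -/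
theorem stmt8 {K : Type*} [RCLike K] (n : ℕ) (hn : 2 ≤ n)
    (r : Fin n → K) (hr : Function.Injective r)
    (I : Ideal (MvPolynomial (Fin n) K))
    (hI : I = Ideal.span {P | ∃ i j : Fin n,
      P = X i ^ 2 - X j ^ 2 + MvPolynomial.C (r i) - MvPolynomial.C (r j)})
    (lam : MvPolynomial (Fin n) K ⧸ I)
    (hlam : ∀ i : Fin n, lam = (Ideal.Quotient.mk I (X i)) ^ 2
      + algebraMap K (MvPolynomial (Fin n) K ⧸ I) (r i))
    (Qodd : Fin n → ℕ → Matrix (Fin (n + 1)) (Fin (n + 1)) (MvPolynomial (Fin n) K ⧸ I))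
    (hQodd : ∀ (l : Fin n) (k : ℕ), Qodd l k =
      (lam ^ k * Ideal.Quotient.mk I (X l)) •
        (Matrix.single l.castSucc (Fin.last n) (1 : MvPolynomial (Fin n) K ⧸ I)
          + Matrix.single (Fin.last n) l.castSucc (1 : MvPolynomial (Fin n) K ⧸ I)))
    (Qeven : Fin n → Fin n → ℕ → Matrix (Fin (n + 1)) (Fin (n + 1)) (MvPolynomial (Fin n) K ⧸ I))
    (hQeven : ∀ (i j : Fin n) (k : ℕ), Qeven i j k =
      (lam ^ k * Ideal.Quotient.mk I (X i) * Ideal.Quotient.mk I (X j)) •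
        (Matrix.single i.castSucc j.castSucc (1 : MvPolynomial (Fin n) K ⧸ I)
          - Matrix.single j.castSucc i.castSucc (1 : MvPolynomial (Fin n) K ⧸ I))) :
    ∀ (i j l : Fin n) (k₁ k₂ : ℕ), i ≠ j →
      ⁅Qeven i j k₁, Qodd l k₂⁆ =
        (if l = j then Qodd i (k₁ + k₂ + 1) else 0)
        - (if i = l then Qodd j (k₁ + k₂ + 1) else 0)
        - (if l = j then r j • Qodd i (k₁ + k₂) else 0)
        + (if i = l then r i • Qodd j (k₁ + k₂) else 0) := by
  intro i j l k₁ k₂ hij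
  simp only [hQeven, hQodd]
  exact aux8 lam (fun m => Ideal.Quotient.mk I (X m)) r
    (fun m => by rw [hlam m]; ring) i j l k₁ k₂ hij
end

section
/- Define Q_i = (E_{i,n+1}+E_{n+1,i}) ⊗ λ̂_i in so_{n,1} ⊗ Q, where Q = K[λ_1,…,λ_n]/(λ_i²−λ_j²+r_i−r_j). Then the elements Q_1,…,Q_n satisfy the defining relations of g(n): [Q_i,[Q_j,Q_k]] = 0 for pairwise distinct i,j,k, and [Q_i,[Q_i,Q_k]] − [Q_j,[Q_j,Q_k]] = (r_j − r_i)·Q_k for i ≠ k, j ≠ k. -/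
set_option synthInstance.maxHeartbeats 1000000
set_option maxHeartbeats 1000000

open MvPolynomial Matrix

private lemma brk_smul {R : Type*} [CommRing R] {m : ℕ} (a b : R)
    (M N : Matrix (Fin m) (Fin m) R) :
    ⁅a • M, b • N⁆ = (a * b) • ⁅M, N⁆ := by
  simp only [Ring.lie_def, smul_mul_assoc, mul_smul_comm, smul_smul, smul_sub, mul_comm]

private lemma smul_quot {K : Type*} [RCLike K] {n : ℕ} {I : Ideal (MvPolynomial (Fin n) K)}
    (c : K) (q : MvPolynomial (Fin n) K ⧸ I) :
    c • q = algebraMap K (MvPolynomial (Fin n) K ⧸ I) c * q :=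
  Algebra.smul_def c q

/-- the elements `Qᵢ = λ̂ᵢ • (E_{i,n+1} + E_{n+1,i})` of
`so_{n,1} ⊗ Q` (realized as matrices over `Q = K[λ₁,…,λₙ]/(λᵢ²−λⱼ²+rᵢ−rⱼ)`)
satisfy the defining relations of `g(n)`. -/
theorem stmt9 {K : Type*} [RCLike K] (n : ℕ) (hn : 3 ≤ n)
    (r : Fin n → K) (hr : Function.Injective r)
    (I : Ideal (MvPolynomial (Fin n) K))
    (hI : I = Ideal.span {P | ∃ i j : Fin n,
      P = X i ^ 2 - X j ^ 2 + MvPolynomial.C (r i) - MvPolynomial.C (r j)})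
    (Q : Fin n → Matrix (Fin (n + 1)) (Fin (n + 1)) (MvPolynomial (Fin n) K ⧸ I))
    (hQ : ∀ i : Fin n, Q i = Ideal.Quotient.mk I (X i) •
      (Matrix.single i.castSucc (Fin.last n) (1 : MvPolynomial (Fin n) K ⧸ I)
        + Matrix.single (Fin.last n) i.castSucc (1 : MvPolynomial (Fin n) K ⧸ I))) :
    (∀ i j k : Fin n, i ≠ j → j ≠ k → i ≠ k → ⁅Q i, ⁅Q j, Q k⁆⁆ = 0) ∧
    (∀ i j k : Fin n, i ≠ k → j ≠ k →
      ⁅Q i, ⁅Q i, Q k⁆⁆ - ⁅Q j, ⁅Q j, Q k⁆⁆ = (r j - r i) • Q k) := by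
  set x : Fin n → MvPolynomial (Fin n) K ⧸ I := fun i => Ideal.Quotient.mk I (X i) with hx
  set A : Fin n → Matrix (Fin (n + 1)) (Fin (n + 1)) (MvPolynomial (Fin n) K ⧸ I) := fun i =>
    single i.castSucc (Fin.last n) (1 : MvPolynomial (Fin n) K ⧸ I)
      + single (Fin.last n) i.castSucc (1 : MvPolynomial (Fin n) K ⧸ I) with hA
  have hQ' : ∀ i, Q i = x i • A i := hQ
  have hne : ∀ i : Fin n, (i.castSucc : Fin (n+1)) ≠ Fin.last n :=
    fun i => (Fin.castSucc_lt_last i).ne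
  have key : ∀ i j : Fin n, i ≠ j → ⁅A i, A j⁆ =
      single i.castSucc j.castSucc (1 : MvPolynomial (Fin n) K ⧸ I)
        - single j.castSucc i.castSucc 1 := by
    intro i j hij
    have h1 : (i.castSucc : Fin (n+1)) ≠ j.castSucc := by simpa using hij
    simp [hA, Ring.lie_def, Matrix.add_mul, Matrix.mul_add,
      Matrix.single_mul_single_same, Matrix.single_mul_single_of_ne,
      hne i, hne j, (hne i).symm, (hne j).symm, h1, h1.symm]
  have key0 : ∀ i j k : Fin n, i ≠ j → j ≠ k → i ≠ k → ⁅A i, ⁅A j, A k⁆⁆ = 0 := by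
    intro i j k hij hjk hik
    rw [key j k hjk]
    have h1 : (i.castSucc : Fin (n+1)) ≠ j.castSucc := by simpa using hij
    have h2 : (i.castSucc : Fin (n+1)) ≠ k.castSucc := by simpa using hik
    simp [hA, Ring.lie_def, Matrix.add_mul, Matrix.mul_add, Matrix.sub_mul, Matrix.mul_sub,
      Matrix.single_mul_single_same, Matrix.single_mul_single_of_ne,
      hne i, hne j, hne k, (hne i).symm, (hne j).symm, (hne k).symm,
      h1, h1.symm, h2, h2.symm]
  have key2 : ∀ i k : Fin n, i ≠ k → ⁅A i, ⁅A i, A k⁆⁆ = A k := by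
    intro i k hik
    have h2 : (i.castSucc : Fin (n+1)) ≠ k.castSucc := by simpa using hik
    rw [key i k hik]
    simp [hA, Ring.lie_def, Matrix.add_mul, Matrix.mul_add, Matrix.sub_mul, Matrix.mul_sub,
      Matrix.single_mul_single_same, Matrix.single_mul_single_of_ne,
      hne i, hne k, (hne i).symm, (hne k).symm, h2, h2.symm]
    try abel
  constructor
  · intro i j k hij hjk hik
    rw [hQ' i, hQ' j, hQ' k, brk_smul, brk_smul, key0 i j k hij hjk hik, smul_zero]
  · intro i j k hik hjk
    have hxx : ∀ i j : Fin n, x i ^ 2 - x j ^ 2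
        = algebraMap K (MvPolynomial (Fin n) K ⧸ I) (r j - r i) := by
      intro i j
      have hmem : X i ^ 2 - X j ^ 2 + MvPolynomial.C (r i) - MvPolynomial.C (r j) ∈ I := by
        rw [hI]; exact Ideal.subset_span ⟨i, j, rfl⟩
      have h0 : Ideal.Quotient.mk I
          (X i ^ 2 - X j ^ 2 + MvPolynomial.C (r i) - MvPolynomial.C (r j)) = 0 :=
        Ideal.Quotient.eq_zero_iff_mem.mpr hmem
      have halg : ∀ c : K, algebraMap K (MvPolynomial (Fin n) K ⧸ I) c
          = Ideal.Quotient.mk I (MvPolynomial.C c) := fun c => rfl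
      simp only [map_sub, map_add, map_pow] at h0
      rw [halg (r j - r i), map_sub, map_sub]
      simp only [hx]
      linear_combination h0
    have e1 : ∀ i k : Fin n, i ≠ k → ⁅Q i, ⁅Q i, Q k⁆⁆ = (x i ^ 2 * x k) • A k := by
      intro i k hik
      rw [hQ' i, hQ' k, brk_smul, brk_smul, key2 i k hik]
      ring_nf
    rw [e1 i k hik, e1 j k hjk, hQ' k, ← smul_assoc, smul_quot,
      ← hxx i j, sub_mul, sub_smul]
end

section
/- Let g(n) be the Lie algebra over K (char 0) with generators p_1,…,p_n (n ≥ 3) and relations [p_i,[p_j,p_k]] = 0 for pairwise distinct i,j,k, and [p_i,[p_i,p_k]] − [p_j,[p_j,p_k]] = (r_j − r_i) p_k for i ≠ k, j ≠ k, where r_1,…,r_n ∈ K are pairwise distinct. Let L(n) ⊆ so_{n,1} ⊗ Q be the Lie subalgebra generated by Q_i = (E_{i,n+1}+E_{n+1,i}) ⊗ λ̂_i. Then there exists a surjective Lie algebra homomorphism φ : g(n) → L(n) with φ(p_i) = Q_i. -/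
set_option synthInstance.maxHeartbeats 1000000
set_option maxHeartbeats 1000000

open MvPolynomial Matrix FreeLieAlgebra

attribute [local instance 100] LieRing.ofAssociativeRing

section auxlemmas
variable {R : Type*} [CommRing R] {m : ℕ}

lemma aux_lie1' (a b c : R) (L i j k : Fin m) (hiL : i ≠ L) (hjL : j ≠ L) (hkL : k ≠ L)
    (hij : i ≠ j) (hjk : j ≠ k) (hik : i ≠ k) :
    ⁅a • (single i L (1:R) + single L i 1),
      ⁅b • (single j L (1:R) + single L j 1),
        c • (single k L (1:R) + single L k 1)⁆⁆ = 0 := by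
  have h1 := hiL.symm; have h2 := hjL.symm; have h3 := hkL.symm
  have h4 := hij.symm; have h5 := hjk.symm; have h6 := hik.symm
  simp [Ring.lie_def, smul_sub, sub_mul, mul_sub, mul_add, add_mul,
    mul_smul_comm, smul_mul_assoc, smul_smul,
    single_mul_single_same, single_mul_single_of_ne, hiL, hjL, hkL, hij, hjk, hik,
    h1, h2, h3, h4, h5, h6, smul_add, smul_zero, mul_one, one_mul,
    not_false_eq_true, add_zero, zero_add, sub_zero, zero_sub, smul_neg]

lemma aux_lie2' (a c : R) (L i k : Fin m) (hiL : i ≠ L) (hkL : k ≠ L) (hik : i ≠ k) :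
    ⁅a • (single i L (1:R) + single L i 1),
      ⁅a • (single i L (1:R) + single L i 1),
        c • (single k L (1:R) + single L k 1)⁆⁆
      = (a * a * c) • (single k L (1:R) + single L k 1) := by
  have h1 := hiL.symm; have h3 := hkL.symm; have h6 := hik.symm
  simp [Ring.lie_def, smul_sub, sub_mul, mul_sub, mul_add, add_mul,
    mul_smul_comm, smul_mul_assoc, smul_smul,
    single_mul_single_same, single_mul_single_of_ne, hiL, hkL, hik,
    h1, h3, h6, smul_add, smul_zero, mul_one, one_mul,
    not_false_eq_true, add_zero, zero_add, sub_zero, zero_sub, smul_neg]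
  ring_nf
  exact add_comm _ _

lemma aux_smul {K M : Type*} [CommSemiring K] [Algebra K R] [AddCommGroup M]
    [Module R M] [Module K M] [IsScalarTower K R M] (a b c : R) (t : K)
    (h : a - b - algebraMap K R t * c = 0) (m : M) :
    a • m - b • m - t • (c • m) = 0 := by
  rw [← algebraMap_smul R t, smul_smul, ← sub_smul, ← sub_smul, h, zero_smul]

end auxlemmas

/-- The Lie ideal of relations of `g(n)` inside the free Lie algebra on `p₁,…,pₙ`. -/
noncomputable def gRelIdeal (K : Type*) [CommRing K] (n : ℕ) (r : Fin n → K) :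
    LieIdeal K (FreeLieAlgebra K (Fin n)) :=
  LieSubmodule.lieSpan K (FreeLieAlgebra K (Fin n))
    ({x | ∃ i j k : Fin n, i ≠ j ∧ j ≠ k ∧ i ≠ k ∧
        x = ⁅of K i, ⁅of K j, of K k⁆⁆} ∪
     {x | ∃ i j k : Fin n, i ≠ k ∧ j ≠ k ∧
        x = ⁅of K i, ⁅of K i, of K k⁆⁆ - ⁅of K j, ⁅of K j, of K k⁆⁆
          - (r j - r i) • of K k})

/-- there is a surjective Lie algebra homomorphism
`φ : g(n) → L(n)` with `φ(pᵢ) = Qᵢ`, where `g(n)` is the quotient of the free Lie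
algebra on `p₁,…,pₙ` by the relations, and `L(n)` is the Lie subalgebra of
`so_{n,1} ⊗ Q` (matrices over `Q = K[λ₁,…,λₙ]/(λᵢ²−λⱼ²+rᵢ−rⱼ)`) generated by the
elements `Qᵢ = λ̂ᵢ • (E_{i,n+1}+E_{n+1,i})`. -/
theorem stmt13 {K : Type*} [RCLike K] (n : ℕ) (hn : 3 ≤ n)
    (r : Fin n → K) (hr : Function.Injective r)
    (I : Ideal (MvPolynomial (Fin n) K))
    (hI : I = Ideal.span {P | ∃ i j : Fin n,
      P = X i ^ 2 - X j ^ 2 + MvPolynomial.C (r i) - MvPolynomial.C (r j)})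
    (Q : Fin n → Matrix (Fin (n + 1)) (Fin (n + 1)) (MvPolynomial (Fin n) K ⧸ I))
    (hQ : ∀ i : Fin n, Q i = Ideal.Quotient.mk I (X i) •
      (Matrix.single i.castSucc (Fin.last n) (1 : MvPolynomial (Fin n) K ⧸ I)
        + Matrix.single (Fin.last n) i.castSucc (1 : MvPolynomial (Fin n) K ⧸ I))) :
    ∃ φ : (FreeLieAlgebra K (Fin n) ⧸ gRelIdeal K n r) →ₗ⁅K⁆
        (LieSubalgebra.lieSpan K (Matrix (Fin (n + 1)) (Fin (n + 1)) (MvPolynomial (Fin n) K ⧸ I))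
          (Set.range Q)),
      Function.Surjective φ ∧
      ∀ i : Fin n,
        ((φ (LieSubmodule.Quotient.mk' (gRelIdeal K n r) (of K i)) :
          LieSubalgebra.lieSpan K (Matrix (Fin (n + 1)) (Fin (n + 1)) (MvPolynomial (Fin n) K ⧸ I))
            (Set.range Q)) :
          Matrix (Fin (n + 1)) (Fin (n + 1)) (MvPolynomial (Fin n) K ⧸ I)) = Q i := by
  classical
  set S := LieSubalgebra.lieSpan K (Matrix (Fin (n + 1)) (Fin (n + 1)) (MvPolynomial (Fin n) K ⧸ I))
    (Set.range Q) with hS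
  have hQmem : ∀ i, Q i ∈ S := fun i => LieSubalgebra.subset_lieSpan ⟨i, rfl⟩
  let f : Fin n → S := fun i => ⟨Q i, hQmem i⟩
  let α : FreeLieAlgebra K (Fin n) →ₗ⁅K⁆ S := FreeLieAlgebra.lift K f
  let β : FreeLieAlgebra K (Fin n) →ₗ⁅K⁆
      Matrix (Fin (n + 1)) (Fin (n + 1)) (MvPolynomial (Fin n) K ⧸ I) :=
    S.incl.comp α
  have hα : ∀ i, α (of K i) = f i := fun i => FreeLieAlgebra.lift_of_apply f i
  have hβ : ∀ i, β (of K i) = Q i := fun i => by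
    show (α (of K i) : Matrix (Fin (n + 1)) (Fin (n + 1)) (MvPolynomial (Fin n) K ⧸ I)) = Q i
    rw [hα]
  have hne : ∀ i : Fin n, (i.castSucc : Fin (n+1)) ≠ Fin.last n :=
    fun i => (Fin.castSucc_lt_last i).ne
  have hne2 : ∀ i j : Fin n, i ≠ j → (i.castSucc : Fin (n+1)) ≠ j.castSucc :=
    fun i j h hh => h (Fin.castSucc_injective n hh)
  have hrel1 : ∀ i j k : Fin n, i ≠ j → j ≠ k → i ≠ k →
      β ⁅of K i, ⁅of K j, of K k⁆⁆ = 0 := by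
    intro i j k hij hjk hik
    rw [LieHom.map_lie, LieHom.map_lie, hβ, hβ, hβ, hQ i, hQ j, hQ k]
    exact aux_lie1' _ _ _ (Fin.last n) i.castSucc j.castSucc k.castSucc (hne i) (hne j) (hne k)
      (hne2 i j hij) (hne2 j k hjk) (hne2 i k hik)
  have hrel2 : ∀ i j k : Fin n, i ≠ k → j ≠ k →
      β (⁅of K i, ⁅of K i, of K k⁆⁆ - ⁅of K j, ⁅of K j, of K k⁆⁆
        - (r j - r i) • of K k) = 0 := by
    intro i j k hik hjk
    rw [map_sub β, map_sub β, map_smul β, LieHom.map_lie, LieHom.map_lie, LieHom.map_lie,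
      LieHom.map_lie, hβ, hβ, hβ, hQ i, hQ j, hQ k]
    rw [aux_lie2' _ _ (Fin.last n) i.castSucc k.castSucc (hne i) (hne k) (hne2 i k hik),
      aux_lie2' _ _ (Fin.last n) j.castSucc k.castSucc (hne j) (hne k) (hne2 j k hjk)]
    rw [← smul_assoc, Algebra.smul_def (r j - r i) (Ideal.Quotient.mk I (X k))]
    have halg : (algebraMap K (MvPolynomial (Fin n) K ⧸ I)) (r j - r i)
        = Ideal.Quotient.mk I (MvPolynomial.C (r j - r i)) := rfl
    have h0 : Ideal.Quotient.mk I (X i) * Ideal.Quotient.mk I (X i) * Ideal.Quotient.mk I (X k)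
        - Ideal.Quotient.mk I (X j) * Ideal.Quotient.mk I (X j) * Ideal.Quotient.mk I (X k)
        - algebraMap K (MvPolynomial (Fin n) K ⧸ I) (r j - r i) * Ideal.Quotient.mk I (X k)
        = 0 := by
      rw [halg, ← _root_.map_mul, ← _root_.map_mul, ← _root_.map_mul, ← _root_.map_mul,
        ← _root_.map_mul, ← map_sub, ← map_sub, Ideal.Quotient.eq_zero_iff_mem]
      have hpoly : X i * X i * X k - X j * X j * X k
          - MvPolynomial.C (r j - r i) * X k
          = (X i ^ 2 - X j ^ 2 + MvPolynomial.C (r i) - MvPolynomial.C (r j)) * X k := by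
        rw [map_sub]; ring
      rw [hpoly, hI]
      exact Ideal.mul_mem_right _ _ (Ideal.subset_span ⟨i, j, rfl⟩)
    have hsub1 := sub_smul
      (Ideal.Quotient.mk I (X i) * Ideal.Quotient.mk I (X i) * Ideal.Quotient.mk I (X k))
      (Ideal.Quotient.mk I (X j) * Ideal.Quotient.mk I (X j) * Ideal.Quotient.mk I (X k))
      (single k.castSucc (Fin.last n) (1 : MvPolynomial (Fin n) K ⧸ I)
        + single (Fin.last n) k.castSucc 1)
    have hsub2 := sub_smul
      (Ideal.Quotient.mk I (X i) * Ideal.Quotient.mk I (X i) * Ideal.Quotient.mk I (X k)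
        - Ideal.Quotient.mk I (X j) * Ideal.Quotient.mk I (X j) * Ideal.Quotient.mk I (X k))
      (algebraMap K (MvPolynomial (Fin n) K ⧸ I) (r j - r i) * Ideal.Quotient.mk I (X k))
      (single k.castSucc (Fin.last n) (1 : MvPolynomial (Fin n) K ⧸ I)
        + single (Fin.last n) k.castSucc 1)
    rw [← hsub1, ← hsub2, h0]
    exact zero_smul (MvPolynomial (Fin n) K ⧸ I)
      (single k.castSucc (Fin.last n) (1 : MvPolynomial (Fin n) K ⧸ I)
        + single (Fin.last n) k.castSucc 1)
  have hker : gRelIdeal K n r ≤ α.ker := by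
    rw [gRelIdeal, LieSubmodule.lieSpan_le]
    rintro x (⟨i, j, k, hij, hjk, hik, rfl⟩ | ⟨i, j, k, hik, hjk, rfl⟩) <;>
      rw [SetLike.mem_coe, LieHom.mem_ker] <;> apply Subtype.ext
    · exact hrel1 i j k hij hjk hik
    · exact hrel2 i j k hik hjk
  have hker' : (gRelIdeal K n r).toSubmodule ≤ LinearMap.ker α.toLinearMap := by
    intro x hx
    exact LieHom.mem_ker.mp (hker ((LieSubmodule.mem_toSubmodule _).mp hx))
  let φ : (FreeLieAlgebra K (Fin n) ⧸ gRelIdeal K n r) →ₗ⁅K⁆ S :=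
    { toLinearMap := (gRelIdeal K n r).toSubmodule.liftQ α.toLinearMap hker'
      map_lie' := by
        intro x y
        obtain ⟨a, rfl⟩ := LieSubmodule.Quotient.surjective_mk' (gRelIdeal K n r) x
        obtain ⟨b, rfl⟩ := LieSubmodule.Quotient.surjective_mk' (gRelIdeal K n r) y
        show ((gRelIdeal K n r).toSubmodule.liftQ α.toLinearMap hker')
            (LieSubmodule.Quotient.mk' _ ⁅a, b⁆) = _
        show α ⁅a, b⁆ = ⁅α a, α b⁆
        exact α.map_lie a b }
  have hφmk : ∀ x, φ (LieSubmodule.Quotient.mk' (gRelIdeal K n r) x) = α x := fun x => rfl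
  refine ⟨φ, ?_, ?_⟩
  · intro s
    have hs : (s : Matrix (Fin (n + 1)) (Fin (n + 1)) (MvPolynomial (Fin n) K ⧸ I)) ∈ β.range := by
      have hle : S ≤ β.range := by
        rw [hS, LieSubalgebra.lieSpan_le]
        rintro x ⟨i, rfl⟩
        exact ⟨of K i, hβ i⟩
      exact hle s.2
    obtain ⟨x, hx⟩ := hs
    refine ⟨LieSubmodule.Quotient.mk' _ x, ?_⟩
    rw [hφmk]
    exact Subtype.ext hx
  · intro i
    rw [hφmk, hα]
end

section
/- In the tensor Lie algebra so_{n,1} ⊗ Q with Q = K[λ_1,…,λ_n]/(λ_i²−λ_j²+r_i−r_j) and λ̂ = λ̂_i²+r_i, for i,j,l,m ∈ {1,…,n} and k_1,k_2 ≥ 1, the elements Q_{ij}^{2k} = (E_{i,j}−E_{j,i})⊗λ̂^{k−1}λ̂_iλ̂_j satisfy [Q_{ij}^{2k_1}, Q_{lm}^{2k_2}] = δ_{lj} Q_{im}^{2(k_1+k_2)} − δ_{im} Q_{lj}^{2(k_1+k_2)} + δ_{jm} Q_{li}^{2(k_1+k_2)} − δ_{il} Q_{jm}^{2(k_1+k_2)}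 + r_i δ_{im} Q_{lj}^{2(k_1+k_2−1)} − r_j δ_{lj} Q_{im}^{2(k_1+k_2−1)} + r_i δ_{il} Q_{jm}^{2(k_1+k_2−1)} − r_j δ_{jm} Q_{li}^{2(k_1+k_2−1)}. -/
set_option synthInstance.maxHeartbeats 1000000
set_option maxHeartbeats 1000000
open MvPolynomial Matrix

lemma aux_key {R ι : Type*} [CommRing R] [DecidableEq ι] [Fintype ι] (p q s t : ι) :
    single p q (1:R) * single s t 1
      = if q = s then single p t 1 else 0 := by
  split_ifs with h
  · subst h; simpa using Matrix.single_mul_single_same p q t (1:R) 1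
  · exact Matrix.single_mul_single_of_ne (c := (1:R)) p q s h 1

lemma aux_lieE {R ι : Type*} [CommRing R] [DecidableEq ι] [Fintype ι] (a b c d : ι) :
    ⁅single a b (1:R) - single b a 1,
      single c d (1:R) - single d c 1⁆ =
      (if c = b then single a d 1 - single d a 1 else 0)
      - (if a = d then single c b 1 - single b c 1 else 0)
      + (if b = d then single c a 1 - single a c 1 else 0)
      - (if a = c then single b d 1 - single d b 1 else 0) := by
  rw [Ring.lie_def]
  simp only [sub_mul, mul_sub, aux_key]
  by_cases h1 : c = b <;> by_cases h2 : a = d <;> by_cases h3 : b = d <;> by_cases h4 : a = c <;>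
    simp_all [eq_comm] <;> abel

lemma aux_dist {R M : Type*} [Semiring R] [AddCommGroup M] [Module R M]
    (c : R) (P1 P2 P3 P4 : Prop) [Decidable P1] [Decidable P2] [Decidable P3] [Decidable P4]
    (X1 X2 X3 X4 : M) :
    c • ((if P1 then X1 else 0) - (if P2 then X2 else 0)
        + (if P3 then X3 else 0) - (if P4 then X4 else 0))
      = (if P1 then c • X1 else 0) - (if P2 then c • X2 else 0)
        + (if P3 then c • X3 else 0) - (if P4 then c • X4 else 0) := by
  split_ifs <;> simp [smul_sub, smul_add]

lemma aux_hbr {K : Type*} [RCLike K] (n : ℕ) (I : Ideal (MvPolynomial (Fin n) K))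
    (c d : MvPolynomial (Fin n) K ⧸ I)
    (A B : Matrix (Fin (n + 1)) (Fin (n + 1)) (MvPolynomial (Fin n) K ⧸ I)) :
    ⁅c • A, d • B⁆ = (c * d) • ⁅A, B⁆ := by
  letI : LieRing (Matrix (Fin (n + 1)) (Fin (n + 1)) (MvPolynomial (Fin n) K ⧸ I)) :=
    LieRing.ofAssociativeRing
  rw [smul_lie c A (d • B), lie_smul d A B, smul_smul]

section terms
variable {K : Type*} [RCLike K] {n : ℕ} (r : Fin n → K)
    (I : Ideal (MvPolynomial (Fin n) K))
    (lam : MvPolynomial (Fin n) K ⧸ I)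
    (hlam : ∀ i : Fin n, lam = (Ideal.Quotient.mk I (X i)) ^ 2
      + algebraMap K (MvPolynomial (Fin n) K ⧸ I) (r i))
    (Qeven : Fin n → Fin n → ℕ → Matrix (Fin (n + 1)) (Fin (n + 1)) (MvPolynomial (Fin n) K ⧸ I))
    (hQeven : ∀ (i j : Fin n) (k : ℕ), Qeven i j k =
      (lam ^ k * Ideal.Quotient.mk I (X i) * Ideal.Quotient.mk I (X j)) •
        (Matrix.single i.castSucc j.castSucc (1 : MvPolynomial (Fin n) K ⧸ I)
          - Matrix.single j.castSucc i.castSucc (1 : MvPolynomial (Fin n) K ⧸ I)))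
    (k₁ k₂ : ℕ) (a b p : Fin n)

include hlam hQeven in
lemma aux_term1 :
    ((lam ^ k₁ * Ideal.Quotient.mk I (X a) * Ideal.Quotient.mk I (X p))
      * (lam ^ k₂ * Ideal.Quotient.mk I (X p) * Ideal.Quotient.mk I (X b))) •
      (single a.castSucc b.castSucc (1 : MvPolynomial (Fin n) K ⧸ I)
        - single b.castSucc a.castSucc 1)
      = Qeven a b (k₁ + k₂ + 1) - r p • Qeven a b (k₁ + k₂) := by
  have hs : (lam ^ k₁ * Ideal.Quotient.mk I (X a) * Ideal.Quotient.mk I (X p))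
        * (lam ^ k₂ * Ideal.Quotient.mk I (X p) * Ideal.Quotient.mk I (X b))
      = lam ^ (k₁ + k₂ + 1) * Ideal.Quotient.mk I (X a) * Ideal.Quotient.mk I (X b)
        - algebraMap K (MvPolynomial (Fin n) K ⧸ I) (r p)
          * (lam ^ (k₁ + k₂) * Ideal.Quotient.mk I (X a) * Ideal.Quotient.mk I (X b)) := by
    linear_combination (-(lam ^ (k₁ + k₂) * Ideal.Quotient.mk I (X a)
      * Ideal.Quotient.mk I (X b))) * hlam p
  rw [hs, sub_smul, mul_smul ((algebraMap K (MvPolynomial (Fin n) K ⧸ I)) (r p)),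
    algebraMap_smul, hQeven, hQeven]

include hlam hQeven in
lemma aux_term2 :
    ((lam ^ k₁ * Ideal.Quotient.mk I (X p) * Ideal.Quotient.mk I (X b))
      * (lam ^ k₂ * Ideal.Quotient.mk I (X a) * Ideal.Quotient.mk I (X p))) •
      (single a.castSucc b.castSucc (1 : MvPolynomial (Fin n) K ⧸ I)
        - single b.castSucc a.castSucc 1)
      = Qeven a b (k₁ + k₂ + 1) - r p • Qeven a b (k₁ + k₂) := by
  have hs : (lam ^ k₁ * Ideal.Quotient.mk I (X p) * Ideal.Quotient.mk I (X b))
        * (lam ^ k₂ * Ideal.Quotient.mk I (X a) * Ideal.Quotient.mk I (X p))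
      = lam ^ (k₁ + k₂ + 1) * Ideal.Quotient.mk I (X a) * Ideal.Quotient.mk I (X b)
        - algebraMap K (MvPolynomial (Fin n) K ⧸ I) (r p)
          * (lam ^ (k₁ + k₂) * Ideal.Quotient.mk I (X a) * Ideal.Quotient.mk I (X b)) := by
    linear_combination (-(lam ^ (k₁ + k₂) * Ideal.Quotient.mk I (X a)
      * Ideal.Quotient.mk I (X b))) * hlam p
  rw [hs, sub_smul, mul_smul ((algebraMap K (MvPolynomial (Fin n) K ⧸ I)) (r p)),
    algebraMap_smul, hQeven, hQeven]

include hlam hQeven in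
lemma aux_term3 :
    ((lam ^ k₁ * Ideal.Quotient.mk I (X b) * Ideal.Quotient.mk I (X p))
      * (lam ^ k₂ * Ideal.Quotient.mk I (X a) * Ideal.Quotient.mk I (X p))) •
      (single a.castSucc b.castSucc (1 : MvPolynomial (Fin n) K ⧸ I)
        - single b.castSucc a.castSucc 1)
      = Qeven a b (k₁ + k₂ + 1) - r p • Qeven a b (k₁ + k₂) := by
  have hs : (lam ^ k₁ * Ideal.Quotient.mk I (X b) * Ideal.Quotient.mk I (X p))
        * (lam ^ k₂ * Ideal.Quotient.mk I (X a) * Ideal.Quotient.mk I (X p))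
      = lam ^ (k₁ + k₂ + 1) * Ideal.Quotient.mk I (X a) * Ideal.Quotient.mk I (X b)
        - algebraMap K (MvPolynomial (Fin n) K ⧸ I) (r p)
          * (lam ^ (k₁ + k₂) * Ideal.Quotient.mk I (X a) * Ideal.Quotient.mk I (X b)) := by
    linear_combination (-(lam ^ (k₁ + k₂) * Ideal.Quotient.mk I (X a)
      * Ideal.Quotient.mk I (X b))) * hlam p
  rw [hs, sub_smul, mul_smul ((algebraMap K (MvPolynomial (Fin n) K ⧸ I)) (r p)),
    algebraMap_smul, hQeven, hQeven]

include hlam hQeven in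
lemma aux_term4 :
    ((lam ^ k₁ * Ideal.Quotient.mk I (X p) * Ideal.Quotient.mk I (X a))
      * (lam ^ k₂ * Ideal.Quotient.mk I (X p) * Ideal.Quotient.mk I (X b))) •
      (single a.castSucc b.castSucc (1 : MvPolynomial (Fin n) K ⧸ I)
        - single b.castSucc a.castSucc 1)
      = Qeven a b (k₁ + k₂ + 1) - r p • Qeven a b (k₁ + k₂) := by
  have hs : (lam ^ k₁ * Ideal.Quotient.mk I (X p) * Ideal.Quotient.mk I (X a))
        * (lam ^ k₂ * Ideal.Quotient.mk I (X p) * Ideal.Quotient.mk I (X b))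
      = lam ^ (k₁ + k₂ + 1) * Ideal.Quotient.mk I (X a) * Ideal.Quotient.mk I (X b)
        - algebraMap K (MvPolynomial (Fin n) K ⧸ I) (r p)
          * (lam ^ (k₁ + k₂) * Ideal.Quotient.mk I (X a) * Ideal.Quotient.mk I (X b)) := by
    linear_combination (-(lam ^ (k₁ + k₂) * Ideal.Quotient.mk I (X a)
      * Ideal.Quotient.mk I (X b))) * hlam p
  rw [hs, sub_smul, mul_smul ((algebraMap K (MvPolynomial (Fin n) K ⧸ I)) (r p)),
    algebraMap_smul, hQeven, hQeven]

end terms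

/-- in `so_{n,1} ⊗ Q`, the elements
`Q_{ij}^{2k} = λ̂^{k−1} λ̂ᵢ λ̂ⱼ • (E_{i,j}−E_{j,i})` satisfy
`[Q_{ij}^{2k₁}, Q_{lm}^{2k₂}] = δ_{lj} Q_{im}^{2(k₁+k₂)} − δ_{im} Q_{lj}^{2(k₁+k₂)}
 + δ_{jm} Q_{li}^{2(k₁+k₂)} − δ_{il} Q_{jm}^{2(k₁+k₂)}
 + rᵢ δ_{im} Q_{lj}^{2(k₁+k₂−1)} − rⱼ δ_{lj} Q_{im}^{2(k₁+k₂−1)}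
 + rᵢ δ_{il} Q_{jm}^{2(k₁+k₂−1)} − rⱼ δ_{jm} Q_{li}^{2(k₁+k₂−1)}`.
(Encoding: `Qeven i j k = Q_{ij}^{2(k+1)}`, so superscripts `2(k₁+k₂+2)` and
`2(k₁+k₂+1)` correspond to indices `k₁+k₂+1` and `k₁+k₂`.) -/
theorem stmt14 {K : Type*} [RCLike K] (n : ℕ) (hn : 2 ≤ n)
    (r : Fin n → K) (hr : Function.Injective r)
    (I : Ideal (MvPolynomial (Fin n) K))
    (hI : I = Ideal.span {P | ∃ i j : Fin n,
      P = X i ^ 2 - X j ^ 2 + MvPolynomial.C (r i) - MvPolynomial.C (r j)})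
    (lam : MvPolynomial (Fin n) K ⧸ I)
    (hlam : ∀ i : Fin n, lam = (Ideal.Quotient.mk I (X i)) ^ 2
      + algebraMap K (MvPolynomial (Fin n) K ⧸ I) (r i))
    (Qeven : Fin n → Fin n → ℕ → Matrix (Fin (n + 1)) (Fin (n + 1)) (MvPolynomial (Fin n) K ⧸ I))
    (hQeven : ∀ (i j : Fin n) (k : ℕ), Qeven i j k =
      (lam ^ k * Ideal.Quotient.mk I (X i) * Ideal.Quotient.mk I (X j)) •
        (Matrix.single i.castSucc j.castSucc (1 : MvPolynomial (Fin n) K ⧸ I)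
          - Matrix.single j.castSucc i.castSucc (1 : MvPolynomial (Fin n) K ⧸ I))) :
    ∀ (i j l m : Fin n) (k₁ k₂ : ℕ),
      ⁅Qeven i j k₁, Qeven l m k₂⁆ =
        (if l = j then Qeven i m (k₁ + k₂ + 1) else 0)
        - (if i = m then Qeven l j (k₁ + k₂ + 1) else 0)
        + (if j = m then Qeven l i (k₁ + k₂ + 1) else 0)
        - (if i = l then Qeven j m (k₁ + k₂ + 1) else 0)
        + (if i = m then r i • Qeven l j (k₁ + k₂) else 0)
        - (if l = j then r j • Qeven i m (k₁ + k₂) else 0)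
        + (if i = l then r i • Qeven j m (k₁ + k₂) else 0)
        - (if j = m then r j • Qeven l i (k₁ + k₂) else 0) := by
  intro i j l m k₁ k₂
  rw [hQeven i j k₁, hQeven l m k₂, aux_hbr, aux_lieE,
    aux_dist (R := MvPolynomial (Fin n) K ⧸ I)
      (M := Matrix (Fin (n + 1)) (Fin (n + 1)) (MvPolynomial (Fin n) K ⧸ I))]
  simp only [Fin.castSucc_inj]
  have e1 : (if l = j then (lam ^ k₁ * Ideal.Quotient.mk I (X i) * Ideal.Quotient.mk I (X j)
        * (lam ^ k₂ * Ideal.Quotient.mk I (X l) * Ideal.Quotient.mk I (X m))) •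
        (single i.castSucc m.castSucc (1 : MvPolynomial (Fin n) K ⧸ I)
          - single m.castSucc i.castSucc 1) else 0)
      = (if l = j then Qeven i m (k₁ + k₂ + 1) else 0)
        - (if l = j then r j • Qeven i m (k₁ + k₂) else 0) := by
    split_ifs with h
    · rw [h]; exact aux_term1 r I lam hlam Qeven hQeven k₁ k₂ i m j
    · rw [sub_zero]
  have e2 : (if i = m then (lam ^ k₁ * Ideal.Quotient.mk I (X i) * Ideal.Quotient.mk I (X j)
        * (lam ^ k₂ * Ideal.Quotient.mk I (X l) * Ideal.Quotient.mk I (X m))) •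
        (single l.castSucc j.castSucc (1 : MvPolynomial (Fin n) K ⧸ I)
          - single j.castSucc l.castSucc 1) else 0)
      = (if i = m then Qeven l j (k₁ + k₂ + 1) else 0)
        - (if i = m then r i • Qeven l j (k₁ + k₂) else 0) := by
    split_ifs with h
    · rw [← h]; exact aux_term2 r I lam hlam Qeven hQeven k₁ k₂ l j i
    · rw [sub_zero]
  have e3 : (if j = m then (lam ^ k₁ * Ideal.Quotient.mk I (X i) * Ideal.Quotient.mk I (X j)
        * (lam ^ k₂ * Ideal.Quotient.mk I (X l) * Ideal.Quotient.mk I (X m))) •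
        (single l.castSucc i.castSucc (1 : MvPolynomial (Fin n) K ⧸ I)
          - single i.castSucc l.castSucc 1) else 0)
      = (if j = m then Qeven l i (k₁ + k₂ + 1) else 0)
        - (if j = m then r j • Qeven l i (k₁ + k₂) else 0) := by
    split_ifs with h
    · rw [← h]; exact aux_term3 r I lam hlam Qeven hQeven k₁ k₂ l i j
    · rw [sub_zero]
  have e4 : (if i = l then (lam ^ k₁ * Ideal.Quotient.mk I (X i) * Ideal.Quotient.mk I (X j)
        * (lam ^ k₂ * Ideal.Quotient.mk I (X l) * Ideal.Quotient.mk I (X m))) •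
        (single j.castSucc m.castSucc (1 : MvPolynomial (Fin n) K ⧸ I)
          - single m.castSucc j.castSucc 1) else 0)
      = (if i = l then Qeven j m (k₁ + k₂ + 1) else 0)
        - (if i = l then r i • Qeven j m (k₁ + k₂) else 0) := by
    split_ifs with h
    · rw [h]; exact aux_term4 r I lam hlam Qeven hQeven k₁ k₂ j m l
    · rw [sub_zero]
  rw [e1, e2, e3, e4]
  abel
end
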